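/- arXiv:1707.05426 — 3 statements merged into one kernel-verified Lean document; each statement's English description precedes it below -/
import Mathlib

section
/- Let f : ℂ → ℂ be continuous with f(z̄) = conj(f(z)) for all z. Then f maps the real axis into the real axis; if moreover f is a homeomorphism of ℂ fixing 0 and 1, then f maps the negative real axis (-∞, 0) bijectively onto itself. -/
open Complex

/-- a continuous map symmetric about the real axis maps reals to reals;
a symmetric homeomorphism of `ℂ` fixing `0` and `1` maps the negative real axis
bijectively onto itself. -/
theorem stmt_1 (f : ℂ → ℂ) (hf : Continuous f)
    (hsym : ∀ z : ℂ, f ((starRingEnd ℂ) z) = (starRingEnd ℂ) (f z)) :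
    (∀ x : ℝ, (f (x : ℂ)).im = 0) ∧
    (∀ e : ℂ ≃ₜ ℂ, (∀ z : ℂ, e ((starRingEnd ℂ) z) = (starRingEnd ℂ) (e z)) →
      e 0 = 0 → e 1 = 1 →
      Set.BijOn e {z : ℂ | z.im = 0 ∧ z.re < 0} {z : ℂ | z.im = 0 ∧ z.re < 0}) := by
  constructor
  · intro x
    have h := hsym (x : ℂ)
    rw [Complex.conj_ofReal] at h
    have h2 := congrArg Complex.im h
    simp [Complex.conj_im] at h2
    linarith
  · intro e hesym h0 h1
    -- e maps reals to reals
    have hreal : ∀ x : ℝ, (e (x : ℂ)).im = 0 := by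
      intro x
      have h := hesym (x : ℂ)
      rw [Complex.conj_ofReal] at h
      have h2 := congrArg Complex.im h
      simp [Complex.conj_im] at h2
      linarith
    set g : ℝ → ℝ := fun x => (e (x : ℂ)).re with hg
    have hge : ∀ x : ℝ, e (x : ℂ) = (g x : ℂ) := by
      intro x
      apply Complex.ext
      · simp [hg]
      · simp [hg, hreal x]
    have hgc : Continuous g := Complex.continuous_re.comp (e.continuous.comp Complex.continuous_ofReal)
    have hgi : Function.Injective g := by
      intro a b hab
      have : e (a : ℂ) = e (b : ℂ) := by rw [hge, hge, hab]
      exact_mod_cast e.injective this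
    have hg0 : g 0 = 0 := by
      have := hge 0; rw [Complex.ofReal_zero, h0] at this
      exact_mod_cast this.symm
    have hg1 : g 1 = 1 := by
      have := hge 1; rw [Complex.ofReal_one, h1] at this
      exact_mod_cast this.symm
    have hmono : StrictMono g := by
      rcases hgc.strictMono_of_inj hgi with h | h
      · exact h
      · exfalso
        have := h (show (0:ℝ) < 1 by norm_num)
        rw [hg0, hg1] at this; linarith
    constructor
    · intro z hz
      obtain ⟨hzim, hzre⟩ := hz
      have hzeq : z = (z.re : ℂ) := by
        apply Complex.ext <;> simp [hzim]
      constructor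
      · rw [hzeq]; exact hreal z.re
      · rw [hzeq, hge]
        have : g z.re < g 0 := hmono hzre
        rw [hg0] at this
        simpa using this
    constructor
    · intro a _ b _ hab
      exact e.injective hab
    · intro y hy
      obtain ⟨hyim, hyre⟩ := hy
      obtain ⟨z, hz⟩ := e.surjective y
      -- z is real
      have hzreal : (starRingEnd ℂ) z = z := by
        apply e.injective
        rw [hesym, hz]
        exact Complex.ext (by simp) (by simp [hyim])
      have hzim : z.im = 0 := by
        have := congrArg Complex.im hzreal
        simp at this; linarith
      have hzeq : z = (z.re : ℂ) := Complex.ext rfl (by simp [hzim])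
      have hgz : g z.re = y.re := by
        have : e (z.re : ℂ) = y := by rw [← hzeq, hz]
        rw [hge] at this
        have := congrArg Complex.re this
        simpa using this
      have hzre : z.re < 0 := by
        by_contra h
        push_neg at h
        have : g 0 ≤ g z.re := hmono.monotone h
        rw [hg0, hgz] at this
        linarith
      exact ⟨z, ⟨hzim, hzre⟩, hz⟩
end

section
/- Let d ≥ 2 be an integer and let R : ℝ → (0, ∞) and ξ : ℝ → ℝ be 2π-periodic, piecewise C¹ functions such that |R'(y)| ≤ C₀, c₁ d ≤ R(y) ≤ c₂ d, and c₁ d ≤ ξ'(y) ≤ c₂ d wherever the derivatives exist, for universal constants C₀, c₁, c₂ > 0 independent of d. Define h(x + iy) = (d·x - d·log R(y)) + i·ξ(y). Then the Beltrami coefficient μ = h_{z̄}/h_z satisfies |μ| ≤ k for some constant k < 1 depending only on C₀, c₁, c₂ and not on d. -/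
open Complex

set_option maxHeartbeats 800000 in
/-- for `h(x+iy) = (d·x - d·log R(y)) + i·ξ(y)` with
`|R'| ≤ C₀`, `c₁ d ≤ R ≤ c₂ d` and `c₁ d ≤ ξ' ≤ c₂ d`, the Beltrami coefficient
`μ = h_{z̄}/h_z` (with `h_x = d`, `h_y = -d·R'(y)/R(y) + i·ξ'(y)`,
`h_z = ½(h_x - i h_y)`, `h_{z̄} = ½(h_x + i h_y)`) satisfies `|μ| ≤ k < 1`
for a constant `k` depending only on `C₀, c₁, c₂`, not on `d`. -/
theorem stmt_9 (C₀ c₁ c₂ : ℝ) (hC₀ : 0 < C₀) (hc₁ : 0 < c₁) (hc₂ : 0 < c₂) :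
    ∃ k : ℝ, 0 ≤ k ∧ k < 1 ∧
      ∀ (d : ℕ), 2 ≤ d → ∀ (R ξ : ℝ → ℝ) (y R' ξ' : ℝ),
        HasDerivAt R R' y → HasDerivAt ξ ξ' y →
        0 < R y → |R'| ≤ C₀ →
        c₁ * d ≤ R y → R y ≤ c₂ * d →
        c₁ * d ≤ ξ' → ξ' ≤ c₂ * d →
        (let hx : ℂ := (d : ℂ)
         let hy : ℂ := -(d : ℂ) * (R' / R y : ℝ) + Complex.I * (ξ' : ℝ)
         let hz : ℂ := (1 / 2) * (hx - Complex.I * hy)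
         let hzbar : ℂ := (1 / 2) * (hx + Complex.I * hy)
         ‖hzbar / hz‖ ≤ k) := by
  set B : ℝ := C₀ / c₁ with hBdef
  have hB : 0 < B := div_pos hC₀ hc₁
  set ε : ℝ := min 1 (4 * c₁ / ((1 + c₂) ^ 2 + B ^ 2)) with hεdef
  have hden : 0 < (1 + c₂) ^ 2 + B ^ 2 := by positivity
  have hε0 : 0 < ε := lt_min one_pos (by positivity)
  have hε1 : ε ≤ 1 := min_le_left _ _
  have hεkey : ε * ((1 + c₂) ^ 2 + B ^ 2) ≤ 4 * c₁ := by
    have := min_le_right 1 (4 * c₁ / ((1 + c₂) ^ 2 + B ^ 2))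
    calc ε * ((1 + c₂) ^ 2 + B ^ 2)
        ≤ (4 * c₁ / ((1 + c₂) ^ 2 + B ^ 2)) * ((1 + c₂) ^ 2 + B ^ 2) := by
          exact mul_le_mul_of_nonneg_right this hden.le
      _ = 4 * c₁ := by field_simp
  clear_value B ε
  refine ⟨Real.sqrt (1 - ε), Real.sqrt_nonneg _, ?_, ?_⟩
  · have : Real.sqrt (1 - ε) < Real.sqrt 1 :=
      Real.sqrt_lt_sqrt (by linarith) (by linarith)
    simpa using this
  intro d hd R ξ y R' ξ' hR hξ hRy hR' h1 h2 h3 h4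
  intro hx hy hz hzbar
  set a : ℝ := (d : ℝ) with hadef
  have ha : (2:ℝ) ≤ a := by rw [hadef]; exact_mod_cast hd
  set s : ℝ := ξ' with hsdef
  set t : ℝ := a * (R' / R y) with htdef
  have hs1 : c₁ * a ≤ s := h3
  have hs2 : s ≤ c₂ * a := h4
  -- explicit forms
  have e1 : hz = (((a + s) / 2 : ℝ) : ℂ) + ((t / 2 : ℝ) : ℂ) * Complex.I := by
    simp only [hz, hx, hy, hadef, hsdef, htdef]
    simp [Complex.ext_iff]
    constructor <;> ring
  have e2 : hzbar = (((a - s) / 2 : ℝ) : ℂ) + ((-(t / 2) : ℝ) : ℂ) * Complex.I := by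
    simp only [hzbar, hx, hy, hadef, hsdef, htdef]
    simp [Complex.ext_iff]
    constructor <;> ring
  have habs1 : ‖hz‖ = Real.sqrt (((a + s) / 2) ^ 2 + (t / 2) ^ 2) := by
    rw [e1, Complex.norm_def, Complex.normSq_add_mul_I]
  have habs2 : ‖hzbar‖ = Real.sqrt (((a - s) / 2) ^ 2 + (t / 2) ^ 2) := by
    rw [e2, Complex.norm_def, Complex.normSq_add_mul_I]
    ring_nf
  -- bound on t
  have h5 : R' ^ 2 ≤ C₀ ^ 2 := by
    nlinarith [_root_.sq_abs R', abs_nonneg R']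
  have htR : t * R y = a * R' := by
    rw [htdef, mul_assoc, div_mul_cancel₀ R' hRy.ne']
  have hBc : B * c₁ = C₀ := by rw [hBdef]; field_simp
  have htB : t ^ 2 ≤ B ^ 2 := by
    have h9 : t ^ 2 * (R y) ^ 2 = a ^ 2 * R' ^ 2 := by
      rw [← mul_pow, ← mul_pow, htR]
    have h10 : a ^ 2 * R' ^ 2 ≤ a ^ 2 * C₀ ^ 2 :=
      mul_le_mul_of_nonneg_left h5 (sq_nonneg a)
    have h11 : a ^ 2 * C₀ ^ 2 ≤ B ^ 2 * (R y) ^ 2 := by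
      have hca : (c₁ * a) ^ 2 ≤ (R y) ^ 2 := by
        have h0a : 0 < c₁ * a := by positivity
        nlinarith
      calc a ^ 2 * C₀ ^ 2 = B ^ 2 * (c₁ * a) ^ 2 := by rw [← hBc]; ring
        _ ≤ B ^ 2 * (R y) ^ 2 := mul_le_mul_of_nonneg_left hca (sq_nonneg B)
    have hRy2 : 0 < (R y) ^ 2 := by positivity
    have := (mul_le_mul_iff_of_pos_right hRy2).mp (by linarith : t ^ 2 * (R y) ^ 2 ≤ B ^ 2 * (R y) ^ 2)
    exact this
  rw [norm_div, habs1, habs2]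
  clear_value a s t
  clear e1 e2 habs1 habs2 htR hR hξ hR' h5
  -- now pure real
  have hq2pos : 0 < ((a + s) / 2) ^ 2 + (t / 2) ^ 2 := by
    have has : 0 < a + s := by nlinarith
    positivity
  have hkey : ((a - s) / 2) ^ 2 + (t / 2) ^ 2
      ≤ (1 - ε) * (((a + s) / 2) ^ 2 + (t / 2) ^ 2) := by
    have h6 : (a + s) ^ 2 + t ^ 2 ≤ ((1 + c₂) ^ 2 + B ^ 2) * a ^ 2 := by
      have hps0 : 0 ≤ a + s := by nlinarith
      have hps : a + s ≤ (1 + c₂) * a := by nlinarith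
      have hsq : (a + s) ^ 2 ≤ ((1 + c₂) * a) ^ 2 := by nlinarith
      have ha1 : 1 ≤ a ^ 2 := by nlinarith
      have hBa : B ^ 2 ≤ B ^ 2 * a ^ 2 := by
        nlinarith [mul_nonneg (sq_nonneg B) (by linarith : (0:ℝ) ≤ a ^ 2 - 1)]
      nlinarith
    have h7 : ε * ((a + s) ^ 2 + t ^ 2) ≤ 4 * c₁ * a ^ 2 := by
      calc ε * ((a + s) ^ 2 + t ^ 2) ≤ ε * (((1 + c₂) ^ 2 + B ^ 2) * a ^ 2) :=
            mul_le_mul_of_nonneg_left h6 hε0.le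
        _ = (ε * ((1 + c₂) ^ 2 + B ^ 2)) * a ^ 2 := by ring
        _ ≤ 4 * c₁ * a ^ 2 := mul_le_mul_of_nonneg_right hεkey (sq_nonneg a)
    have h8 : 4 * c₁ * a ^ 2 ≤ 4 * (a * s) := by nlinarith
    nlinarith
  rw [← Real.sqrt_div (by positivity)]
  refine Real.sqrt_le_sqrt ?_
  rw [div_le_iff₀ hq2pos]
  linarith [hkey]
end

section
/- A continuum (compact connected metric space) cannot fail to be locally connected at exactly one point: if a continuum K in a metric space is locally connected at every point except possibly one point p, then K is locally connected at p as well. -/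
/-- `K` is locally connected at `x` if every neighborhood of `x` contains a
connected neighborhood of `x`. -/
def LocallyConnectedAt {K : Type*} [TopologicalSpace K] (x : K) : Prop :=
  ∀ U ∈ nhds x, ∃ V ∈ nhds x, V ⊆ U ∧ IsPreconnected V

/-- a continuum (compact connected metric space) cannot fail to be
locally connected at exactly one point. -/
theorem stmt_14 (K : Type*) [MetricSpace K] [CompactSpace K] [ConnectedSpace K]
    (p : K) (h : ∀ x : K, x ≠ p → LocallyConnectedAt x) :
    LocallyConnectedAt p := by
  intro U hU
  obtain ⟨ε, hε, hballU⟩ : ∃ ε > 0, Metric.ball p ε ⊆ U := Metric.mem_nhds_iff.mp hU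
  set B : Set K := Metric.ball p ε with hB
  have hBopen : IsOpen B := Metric.isOpen_ball
  have hpB : p ∈ B := Metric.mem_ball_self hε
  set C : Set K := connectedComponentIn B p with hCdef
  -- it suffices to show C is a neighborhood of p
  suffices hC : C ∈ nhds p by
    exact ⟨C, hC, (connectedComponentIn_subset B p).trans hballU,
      isPreconnected_connectedComponentIn⟩
  by_contra hC
  -- Lemma 1: components of B are neighborhoods of their points other than p
  have hnbhd : ∀ y ∈ B, y ≠ p → connectedComponentIn B y ∈ nhds y := by
    intro y hy hyp
    obtain ⟨V, hV, hVB, hVc⟩ := h y hyp B (hBopen.mem_nhds hy)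
    exact Filter.mem_of_superset hV
      (hVc.subset_connectedComponentIn (mem_of_mem_nhds hV) hVB)
  -- disjointness of components
  have hdisj : ∀ x ∈ B, x ∉ C → ∀ w ∈ connectedComponentIn B x, w ∉ C := by
    intro x hx hxC w hw hwC
    have h1 := connectedComponentIn_eq hw
    have h2 := connectedComponentIn_eq hwC
    exact hxC (show x ∈ C by rw [hCdef, h2, ← h1]; exact mem_connectedComponentIn hx)
  -- points of a component ≠ p
  have hnep : ∀ x ∈ B, x ∉ C → ∀ w ∈ connectedComponentIn B x, w ≠ p := by
    intro x hx hxC w hw hwp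
    subst hwp
    exact hdisj x hx hxC w hw (mem_connectedComponentIn hpB)
  -- Lemma 2: p is not in the closure of any other component
  have hpcl : ∀ x ∈ B, x ∉ C → p ∉ closure (connectedComponentIn B x) := by
    intro x hx hxC hp
    have hconn : IsPreconnected (insert p (connectedComponentIn B x)) :=
      isPreconnected_connectedComponentIn.subset_closure (Set.subset_insert _ _)
        (Set.insert_subset hp subset_closure)
    have hsub : insert p (connectedComponentIn B x) ⊆ C :=
      hconn.subset_connectedComponentIn (Set.mem_insert _ _)
        (Set.insert_subset hpB (connectedComponentIn_subset B x))
    exact hxC (hsub (Set.mem_insert_iff.mpr (Or.inr (mem_connectedComponentIn hx))))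
  -- Lemma 3: closure of a component intersected with B lies in the component
  have hclin : ∀ x ∈ B, x ∉ C → ∀ z ∈ closure (connectedComponentIn B x), z ∈ B →
      z ∈ connectedComponentIn B x := by
    intro x hx hxC z hz hzB
    by_contra hzD
    have hzp : z ≠ p := fun hzp => hpcl x hx hxC (hzp ▸ hz)
    have hE : connectedComponentIn B z ∈ nhds z := hnbhd z hzB hzp
    obtain ⟨w, hw1, hw2⟩ := mem_closure_iff_nhds.mp hz _ hE
    have := (connectedComponentIn_eq hw1).trans (connectedComponentIn_eq hw2).symm
    exact hzD (this ▸ mem_connectedComponentIn hzB)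
  -- Lemma 4: closure of another component escapes B
  have hesc : ∀ x ∈ B, x ∉ C → ∃ z ∈ closure (connectedComponentIn B x), z ∉ B := by
    intro x hx hxC
    by_contra hcl
    push_neg at hcl
    have hclosed : IsClosed (connectedComponentIn B x) := by
      rw [← closure_subset_iff_isClosed]
      intro z hz
      exact hclin x hx hxC z hz (hcl z hz)
    have hopen : IsOpen (connectedComponentIn B x) := by
      rw [isOpen_iff_mem_nhds]
      intro y hy
      have hyB : y ∈ B := connectedComponentIn_subset B x hy
      have := hnbhd y hyB (hnep x hx hxC y hy)
      rwa [connectedComponentIn_eq hy]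
    rcases isClopen_iff.mp ⟨hclosed, hopen⟩ with h0 | h1
    · exact (h0 ▸ mem_connectedComponentIn hx : x ∈ (∅ : Set K))
    · exact hnep x hx hxC p (h1 ▸ Set.mem_univ p) rfl
  -- the sequence xₙ → p, outside C
  have hx : ∀ n : ℕ, ∃ x, dist x p < min (ε / 2) (1 / (n + 1)) ∧ x ∈ B ∧ x ∉ C := by
    intro n
    have hδ : 0 < min (ε / 2) (1 / (n + 1 : ℝ)) :=
      lt_min (by linarith) (by positivity)
    by_contra hno
    push_neg at hno
    apply hC
    apply Filter.mem_of_superset (Metric.ball_mem_nhds p hδ)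
    intro w hw
    have hwB : w ∈ B := by
      have : dist w p < ε := lt_of_lt_of_le hw ((min_le_left _ _).trans (by linarith))
      simpa [hB, Metric.mem_ball] using this
    exact hno w hw hwB
  choose x hx1 hx2 hx3 using hx
  have htend : Filter.Tendsto x Filter.atTop (nhds p) := by
    rw [Metric.tendsto_atTop]
    intro δ hδ
    obtain ⟨N, hN⟩ := exists_nat_one_div_lt hδ
    refine ⟨N, fun n hn => ?_⟩
    calc dist (x n) p < min (ε / 2) (1 / (n + 1)) := hx1 n
      _ ≤ 1 / (n + 1) := min_le_right _ _
      _ ≤ 1 / (N + 1) := by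
          apply one_div_le_one_div_of_le (by positivity)
          exact_mod_cast by omega
      _ < δ := hN
  -- pick yₙ in each component at distance ε/2 from p
  have hyex : ∀ n : ℕ, ∃ y ∈ connectedComponentIn B (x n), dist p y = ε / 2 := by
    intro n
    obtain ⟨z, hz1, hz2⟩ := hesc (x n) (hx2 n) (hx3 n)
    have hzd : ε ≤ dist p z := by
      by_contra hlt
      exact hz2 (by simpa [hB, Metric.mem_ball, dist_comm] using lt_of_not_ge hlt)
    have hxcl : x n ∈ closure (connectedComponentIn B (x n)) :=
      subset_closure (mem_connectedComponentIn (hx2 n))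
    have hcont : Continuous fun w : K => dist p w := continuous_const.dist continuous_id
    have hIVT := (isPreconnected_connectedComponentIn
        (x := x n) (F := B)).closure.intermediate_value (f := fun w => dist p w) hxcl hz1
        hcont.continuousOn
    have hmem : (ε / 2) ∈ Set.Icc (dist p (x n)) (dist p z) := by
      constructor
      · have := hx1 n
        rw [dist_comm]
        exact le_of_lt (lt_of_lt_of_le this (min_le_left _ _))
      · linarith
    obtain ⟨y, hy1, hy2⟩ := hIVT hmem
    change dist p y = ε / 2 at hy2
    have hyB : y ∈ B := by
      simp only [hB, Metric.mem_ball, dist_comm]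
      rw [hy2]; linarith
    exact ⟨y, hclin (x n) (hx2 n) (hx3 n) y hy1 hyB, hy2⟩
  choose y hy1 hy2 using hyex
  -- a cluster point of the yₙ
  obtain ⟨q, hq⟩ := exists_clusterPt_of_compactSpace (Filter.map y Filter.atTop)
  have hqdist : dist p q = ε / 2 := by
    have hS : IsClosed {w : K | dist p w = ε / 2} :=
      isClosed_eq (continuous_const.dist continuous_id) continuous_const
    have hle : Filter.map y Filter.atTop ≤ Filter.principal {w : K | dist p w = ε / 2} :=
      Filter.le_principal_iff.mpr (Filter.mem_map.mpr
        (Filter.mem_of_superset Filter.univ_mem fun n _ => hy2 n))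
    have : q ∈ closure {w : K | dist p w = ε / 2} :=
      mem_closure_iff_clusterPt.mpr (hq.mono hle)
    rwa [hS.closure_eq] at this
  have hqB : q ∈ B := by
    simp only [hB, Metric.mem_ball, dist_comm]
    rw [hqdist]; linarith
  have hqp : q ≠ p := by
    intro hqp
    rw [hqp, dist_self] at hqdist
    linarith
  obtain ⟨W, hW, hWB, hWc⟩ := h q hqp B (hBopen.mem_nhds hqB)
  have hfreq : ∃ᶠ n in Filter.atTop, y n ∈ W :=
    (mapClusterPt_iff_frequently.mp hq) W hW
  obtain ⟨n₀, hn₀⟩ := hfreq.exists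
  -- W is contained in the component of x n₀
  have hWD : W ⊆ connectedComponentIn B (x n₀) := by
    rw [connectedComponentIn_eq (hy1 n₀)]
    exact hWc.subset_connectedComponentIn hn₀ hWB
  -- frequently x n ∈ component of x n₀
  have hfreqx : ∃ᶠ n in Filter.atTop, x n ∈ connectedComponentIn B (x n₀) := by
    apply hfreq.mono
    intro n hn
    have h1 : y n ∈ connectedComponentIn B (x n₀) := hWD hn
    have h2 := connectedComponentIn_eq h1
    have h3 := connectedComponentIn_eq (hy1 n)
    rw [h2, ← h3]
    exact mem_connectedComponentIn (hx2 n)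
  exact hpcl (x n₀) (hx2 n₀) (hx3 n₀)
    (mem_closure_of_frequently_of_tendsto hfreqx htend)
end
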